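/- For all real P_X > 1 and 1 < P_J < P_X, with C_2 = (1/2)·log₂(P_J), the quantity C_2 + (1/2)·log₂(1 + P_X/(P_J+1)) − (1/2)·log₂((1+P_X)/(1 + min{1+P_X, P_J·P_X/(P_X+1)}·2^(−2C_2))) is at most 1. -/

import Mathlib

open Real

theorem caseA_gap_lowJ (P_X P_J : ℝ) (hX : 1 < P_X) (hJ1 : 1 < P_J) (hJ : P_J < P_X) :
    let C2 := (1/2) * logb 2 P_J
    C2 + (1/2) * logb 2 (1 + P_X / (P_J + 1))
      - (1/2) * logb 2 ((1 + P_X) /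
          (1 + min (1 + P_X) (P_J * P_X / (P_X + 1)) * (2:ℝ) ^ (-(2 * C2)))) ≤ 1 := by
  intro C2
  have hC2 : C2 = (1/2) * logb 2 P_J := rfl
  have hPX0 : (0:ℝ) < P_X := by linarith
  have hPJ0 : (0:ℝ) < P_J := by linarith
  have hmin : min (1 + P_X) (P_J * P_X / (P_X + 1)) = P_J * P_X / (P_X + 1) := by
    rw [min_eq_right]
    rw [div_le_iff₀ (by linarith)]
    nlinarith
  have hrpow : (2:ℝ) ^ (-(2 * C2)) = P_J⁻¹ := by
    have h1 : -(2 * C2) = logb 2 P_J⁻¹ := by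
      rw [hC2, Real.logb, Real.logb, Real.log_inv]; ring
    rw [h1, Real.rpow_logb (by norm_num) (by norm_num) (by positivity)]
  rw [hmin, hrpow]
  have hsimp : 1 + P_J * P_X / (P_X + 1) * P_J⁻¹ = 1 + P_X / (P_X + 1) := by
    field_simp
  rw [hsimp, hC2]
  have hA : (0:ℝ) < 1 + P_X / (P_J + 1) := by positivity
  have hBden : (0:ℝ) < 1 + P_X / (P_X + 1) := by positivity
  have hB : (0:ℝ) < (1 + P_X) / (1 + P_X / (P_X + 1)) := by positivity
  have h4 : P_J * (1 + P_X / (P_J + 1)) / ((1 + P_X) / (1 + P_X / (P_X + 1))) ≤ 4 := by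
    rw [div_le_iff₀ hB, ← mul_div_assoc, le_div_iff₀ hBden]
    have hd1 : (P_J:ℝ) + 1 ≠ 0 := by linarith
    have hd2 : (P_X:ℝ) + 1 ≠ 0 := by linarith
    field_simp
    nlinarith [mul_pos (by linarith : (0:ℝ) < P_J + 1) (by linarith : (0:ℝ) < 4 * P_X + 3),
      mul_pos (by linarith : (0:ℝ) < 2 * P_X + 1)
        (by nlinarith : (0:ℝ) < P_J * (P_X - P_J) + 2 * P_X + 1)]
  have key : logb 2 (P_J * (1 + P_X / (P_J + 1)) / ((1 + P_X) / (1 + P_X / (P_X + 1)))) ≤ 2 := by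
    have h2 : logb 2 (4:ℝ) = 2 := by
      rw [show (4:ℝ) = 2 ^ (2:ℝ) by norm_num, Real.logb_rpow (by norm_num) (by norm_num)]
    calc logb 2 _ ≤ logb 2 4 := Real.logb_le_logb_of_le (by norm_num) (by positivity) h4
      _ = 2 := h2
  have expand : logb 2 (P_J * (1 + P_X / (P_J + 1)) / ((1 + P_X) / (1 + P_X / (P_X + 1))))
      = logb 2 P_J + logb 2 (1 + P_X / (P_J + 1))
        - logb 2 ((1 + P_X) / (1 + P_X / (P_X + 1))) := by
    rw [Real.logb_div (by positivity) (ne_of_gt hB),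
      Real.logb_mul (ne_of_gt hPJ0) (ne_of_gt hA)]
  rw [expand] at key
  linarith
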